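/- Let α, γ be positive real numbers and let x : ℕ → ℝ be a sequence of positive real numbers satisfying x_n · x_{n+6} = α · x_{n+1} · x_{n+5} + γ · x_{n+3}² for all n ≥ 1. Define u_n := (x_n · x_{n+2})/x_{n+1}². Then u satisfies the fourth-order U-system u_n · u_{n+4} = (α · u_{n+1} · u_{n+2}² · u_{n+3} + γ)/(u_{n+1}² · u_{n+2}³ · u_{n+3}²) for all n ≥ 1. -/

import Mathlib

/-- For the three-term Somos-6 recurrence
`x n * x (n+6) = α * x (n+1) * x (n+5) + γ * x (n+3)^2` on positive reals (with
`α, γ > 0`), the quantities `u n = x n * x (n+2) / x (n+1)^2` satisfy the fourth-order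
U-system `u n * u (n+4) = (α * u (n+1) * u (n+2)^2 * u (n+3) + γ) /
(u (n+1)^2 * u (n+2)^3 * u (n+3)^2)`. -/
theorem stmt_17 (α γ : ℝ) (hα : 0 < α) (hγ : 0 < γ)
    (x : ℕ → ℝ) (hpos : ∀ n, 0 < x n)
    (hrec : ∀ n, 1 ≤ n →
      x n * x (n + 6) = α * x (n + 1) * x (n + 5) + γ * x (n + 3) ^ 2)
    (u : ℕ → ℝ) (hu : ∀ n, u n = x n * x (n + 2) / x (n + 1) ^ 2) :
    ∀ n, 1 ≤ n →
      u n * u (n + 4) = (α * u (n + 1) * u (n + 2) ^ 2 * u (n + 3) + γ) /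
        (u (n + 1) ^ 2 * u (n + 2) ^ 3 * u (n + 3) ^ 2) := by
  intro n hn
  have h0 := (hpos n).ne'
  have h1 := (hpos (n+1)).ne'
  have h2 := (hpos (n+2)).ne'
  have h3 := (hpos (n+3)).ne'
  have h4 := (hpos (n+4)).ne'
  have h5 := (hpos (n+5)).ne'
  have h6 := (hpos (n+6)).ne'
  have key := hrec n hn
  simp only [hu]
  have e1 : n + 1 + 2 = n + 3 := by ring
  have e2 : n + 2 + 2 = n + 4 := by ring
  have e3 : n + 3 + 2 = n + 5 := by ring
  have e4 : n + 4 + 2 = n + 6 := by ring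
  have e5 : n + 1 + 1 = n + 2 := by ring
  have e6 : n + 2 + 1 = n + 3 := by ring
  have e7 : n + 3 + 1 = n + 4 := by ring
  have e8 : n + 4 + 1 = n + 5 := by ring
  rw [e1, e2, e3, e4, e5, e6, e7, e8]
  field_simp
  linear_combination key
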